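/- arXiv:2410.22745 — 4 statements merged into one kernel-verified Lean document; each statement's English description precedes it below -/
import Mathlib

section
/- Let p be an odd prime, let P be a finite non-abelian p-group, and let N be a cyclic normal subgroup of P such that P/N is cyclic. Then there exists a group homomorphism lambda : N -> C^x whose stabilizer {g in P : lambda(g n g^{-1}) = lambda(n) for all n in N} under the conjugation action of P has index exactly p in P. -/
lemma nt_aux (p r k : ℕ) (hp : p.Prime) (hodd : Odd p) (hk : 1 ≤ k)
    (x : ℤ)
    (h1 : (p:ℤ)^r ∣ x ^ p ^ k - 1) (h2 : ¬ (p:ℤ)^r ∣ x ^ p ^ (k-1) - 1) :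
    ((p:ℤ)^r ∣ (p:ℤ)^(k-1) * (x ^ p - 1)) ∧ ¬ (p:ℤ)^r ∣ (p:ℤ)^(k-1) * (x - 1) := by
  haveI : Fact p.Prime := ⟨hp⟩
  have hpI : Prime (p:ℤ) := Int.prime_iff_natAbs_prime.mpr (by simpa using hp)
  have hr1 : 1 ≤ r := by
    by_contra h
    interval_cases r
    · exact h2 (one_dvd _)
  have hp1 : (p:ℤ) ∣ x - 1 := by
    have hd : (p:ℤ) ∣ x ^ p ^ k - 1 := dvd_trans (dvd_pow_self _ (Nat.one_le_iff_ne_zero.mp hr1)) h1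
    have hf : (p:ℤ) ∣ x ^ p ^ k - x := by
      have : ((x : ZMod p))^ p ^ k = (x : ZMod p) := ZMod.pow_card_pow _
      exact (ZMod.intCast_zmod_eq_zero_iff_dvd (x ^ p ^ k - x) p).mp (by push_cast [this]; ring)
    have : x - 1 = (x ^ p ^ k - 1) - (x ^ p ^ k - x) := by ring
    rw [this]
    exact dvd_sub hd hf
  have hx : ¬ (p:ℤ) ∣ x := by
    intro h
    have : (p:ℤ) ∣ 1 := by
      have e1 : (1:ℤ) = x - (x - 1) := by ring
      rw [e1]; exact dvd_sub h hp1
    exact hpI.not_unit (isUnit_of_dvd_one this)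
  have hx1 : x - 1 ≠ 0 := by
    intro h
    apply h2
    have : x = 1 := by omega
    simp [this]
  have hfin : FiniteMultiplicity (p:ℤ) (x - 1) :=
    Int.finiteMultiplicity_iff.mpr ⟨by simpa using hp.ne_one, hx1⟩
  obtain ⟨e, he⟩ : ∃ e : ℕ, emultiplicity (p:ℤ) (x - 1) = e :=
    ⟨_, hfin.emultiplicity_eq_multiplicity⟩
  have lte : ∀ n : ℕ, emultiplicity (p:ℤ) (x ^ n - 1) = (e:ℕ∞) + emultiplicity p n := by
    intro n
    have := Int.emultiplicity_pow_sub_pow hp hodd (y := 1) (by simpa using hp1) hx n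
    simpa [he] using this
  have hmp : ∀ m : ℕ, emultiplicity p (p ^ m) = (m : ℕ∞) :=
    fun m => emultiplicity_pow_self_of_prime hp.prime m
  have hpp : emultiplicity p p = 1 := by simpa using hmp 1
  have hub : r ≤ e + k := by
    have := le_emultiplicity_of_pow_dvd h1
    rw [lte, hmp] at this
    exact_mod_cast this
  have hlb : ¬ (r ≤ e + (k-1)) := by
    intro h
    apply h2
    apply pow_dvd_of_le_emultiplicity
    rw [lte, hmp]
    exact_mod_cast h
  constructor
  · apply pow_dvd_of_le_emultiplicity
    rw [emultiplicity_mul hpI, lte p, hpp, emultiplicity_pow_self_of_prime hpI]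
    have : ((k-1:ℕ):ℕ∞) + ((e:ℕ∞) + 1) = (((k-1) + (e+1) : ℕ) : ℕ∞) := by push_cast; ring
    rw [this]
    exact_mod_cast (by omega : r ≤ (k-1) + (e+1))
  · apply not_pow_dvd_of_emultiplicity_lt
    rw [emultiplicity_mul hpI, emultiplicity_pow_self_of_prime hpI, he]
    have : ((k-1:ℕ):ℕ∞) + (e:ℕ∞) = (((k-1) + e : ℕ) : ℕ∞) := by push_cast; ring
    rw [this]
    exact_mod_cast (by omega : (k-1) + e < r)

lemma index_eq_p {G : Type*} [Group G] [Finite G] (p : ℕ) (hp : p.Prime)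
    (σ : G) (hgen : ∀ x : G, x ∈ Subgroup.zpowers σ)
    (H : Subgroup G) (hmem : σ ^ p ∈ H) (hnmem : σ ∉ H) : H.index = p := by
  have hcard : Nat.card G = orderOf σ := (orderOf_eq_card_of_forall_mem_zpowers hgen).symm
  have hm0 : orderOf σ ≠ 0 := (orderOf_pos σ).ne'
  set J := Subgroup.zpowers (σ ^ p) with hJ
  have hJle : J ≤ H := Subgroup.zpowers_le.mpr hmem
  have hJcard : Nat.card J = orderOf σ / Nat.gcd (orderOf σ) p := by
    rw [Nat.card_zpowers, orderOf_pow]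
  have hJmul := Subgroup.card_mul_index J
  have hHne : H.index ≠ 1 := by
    intro h
    exact hnmem (Subgroup.index_eq_one.mp h ▸ Subgroup.mem_top σ)
  by_cases hdvd : p ∣ orderOf σ
  · have hgcd : Nat.gcd (orderOf σ) p = p := Nat.gcd_eq_right hdvd
    have hJidx : J.index = p := by
      rw [hJcard, hgcd, hcard] at hJmul
      have hple : p ∣ orderOf σ := hdvd
      have : orderOf σ / p * p = orderOf σ := Nat.div_mul_cancel hple
      have hp0 : 0 < orderOf σ / p := Nat.div_pos (Nat.le_of_dvd (Nat.pos_of_ne_zero hm0) hple) hp.pos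
      nlinarith [Nat.pos_of_ne_zero hm0]
    have hdvd2 : H.index ∣ p := hJidx ▸ Subgroup.index_dvd_of_le hJle
    rcases (Nat.Prime.eq_one_or_self_of_dvd hp _ hdvd2) with h | h
    · exact absurd h hHne
    · exact h
  · exfalso
    have hgcd : Nat.gcd (orderOf σ) p = 1 :=
      Nat.Coprime.gcd_eq_one ((hp.coprime_iff_not_dvd.mpr hdvd).symm)
    have hJidx : J.index = 1 := by
      rw [hJcard, hgcd, Nat.div_one, hcard] at hJmul
      have h0 : 0 < orderOf σ := Nat.pos_of_ne_zero hm0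
      nlinarith [hJmul, Nat.pos_of_ne_zero (Subgroup.index_ne_zero_of_finite (H := J))]
    have : H.index ∣ 1 := hJidx ▸ Subgroup.index_dvd_of_le hJle
    exact hHne (Nat.dvd_one.mp this)

lemma char_exists {A : Type*} [Group A] [Finite A] (hA : IsCyclic A) :
    ∃ (χ : A →* ℂˣ) (g₀ : A), (∀ x : A, x ∈ Subgroup.zpowers g₀) ∧
      orderOf (χ g₀) = Nat.card A := by
  classical
  set n := Nat.card A with hn
  have hn0 : n ≠ 0 := Nat.card_pos.ne'
  haveI : NeZero n := ⟨hn0⟩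
  have hζ : IsPrimitiveRoot (Complex.exp (2 * Real.pi * Complex.I / n)) n :=
    Complex.isPrimitiveRoot_exp n hn0
  have hζu : IsUnit (Complex.exp (2 * Real.pi * Complex.I / n)) :=
    hζ.isUnit hn0
  set ζ : ℂˣ := hζu.unit with hζdef
  have hζuP : IsPrimitiveRoot ζ n := hζ.isUnit_unit hn0
  have hζord : orderOf ζ = n := hζuP.eq_orderOf.symm
  have hζn : ζ ^ n = 1 := hζuP.pow_eq_one
  set e : Multiplicative (ZMod n) ≃* A := hn ▸ zmodCyclicMulEquiv hA with he
  set g₀ : A := e (Multiplicative.ofAdd 1) with hg₀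
  have hcond : (zmultiplesHom (Additive ℂˣ) (Additive.ofMul ζ)) (n : ℤ) = 0 := by
    show (n : ℤ) • (Additive.ofMul ζ) = 0
    rw [← ofMul_zpow, zpow_natCast, hζn, ofMul_one]
  set ψ : ZMod n →+ Additive ℂˣ := ZMod.lift n ⟨zmultiplesHom (Additive ℂˣ) (Additive.ofMul ζ), hcond⟩ with hψ
  set χ : A →* ℂˣ := (AddMonoidHom.toMultiplicativeLeft ψ).comp e.symm.toMonoidHom with hχ
  have hval : χ g₀ = ζ := by
    have step : χ g₀ = Additive.toMul (ψ ((1 : ℤ) : ZMod n)) := by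
      rw [hχ, hg₀]
      simp only [MonoidHom.comp_apply, MulEquiv.coe_toMonoidHom, MulEquiv.symm_apply_apply,
        AddMonoidHom.coe_toMultiplicativeLeft, Function.comp_apply, toAdd_ofAdd]
      norm_num
    rw [step, hψ, ZMod.lift_coe]
    show Additive.toMul ((1:ℤ) • Additive.ofMul ζ) = ζ
    simp
  refine ⟨χ, g₀, ?_, by rw [hval, hζord]⟩
  intro x
  obtain ⟨b, hb⟩ : ∃ b : ZMod n, e (Multiplicative.ofAdd b) = x := ⟨Multiplicative.toAdd (e.symm x), by simp⟩
  have hbv : b = (b.val : ℕ) • (1 : ZMod n) := by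
    rw [nsmul_eq_mul, mul_one, ZMod.natCast_val, ZMod.cast_id]
  refine ⟨(b.val : ℤ), ?_⟩
  show g₀ ^ (b.val : ℤ) = x
  rw [← hb, hg₀, zpow_natCast, ← map_pow, ← ofAdd_nsmul, ← hbv]


/-- Let `p` be an odd prime, `P` a finite non-abelian `p`-group and
`N` a cyclic normal subgroup of `P` with cyclic quotient `P/N`. Then there is a
homomorphism `lam : N → ℂˣ` whose stabilizer
`{g ∈ P | lam (g n g⁻¹) = lam n for all n ∈ N}` under the conjugation action of `P`
has index exactly `p` in `P`. -/
theorem exists_character_with_stabilizer_of_index_p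
    (p : ℕ) (hp : p.Prime) (hodd : Odd p)
    (P : Type*) [Group P] [Finite P] (hP : IsPGroup p P)
    (hnab : ¬ ∀ a b : P, a * b = b * a)
    (N : Subgroup P) (hN : N.Normal) (hNcyc : IsCyclic N)
    (hQcyc : @IsCyclic (P ⧸ N) (@ZPow.toPow _ (@DivInvMonoid.toZPow _ (@Group.toDivInvMonoid _
      (@QuotientGroup.Quotient.group P _ N hN))))) :
    ∃ lam : N →* ℂˣ,
      Subgroup.index
        { carrier := {g : P | ∀ n : N, lam ⟨g * (n : P) * g⁻¹, hN.conj_mem n n.2 g⟩ = lam n}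
          one_mem' := by
            intro n
            congr 1
            ext
            simp
          mul_mem' := by
            intro a b ha hb n
            have h1 := ha ⟨b * (n : P) * b⁻¹, hN.conj_mem n n.2 b⟩
            have h2 := hb n
            have key : lam ⟨a * b * (n : P) * (a * b)⁻¹,
                hN.conj_mem n n.2 (a * b)⟩ =
                lam ⟨a * (b * (n : P) * b⁻¹) * a⁻¹,
                  hN.conj_mem _ (hN.conj_mem n n.2 b) a⟩ := by
              congr 1
              ext
              group
            exact key.trans (h1.trans h2)
          inv_mem' := by
            intro g hg n
            have h1 := hg ⟨g⁻¹ * (n : P) * g⁻¹⁻¹, hN.conj_mem n n.2 g⁻¹⟩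
            have key : lam ⟨g * (g⁻¹ * (n : P) * g⁻¹⁻¹) * g⁻¹,
                hN.conj_mem _ (hN.conj_mem n n.2 g⁻¹) g⟩ = lam n := by
              congr 1
              ext
              group
            rw [key] at h1
            exact h1.symm } = p := by
  classical
  haveI := hN
  haveI : Fact p.Prime := ⟨hp⟩
  haveI : IsCyclic (P ⧸ N) := hQcyc
  set φ : P →* MulAut N := MulAut.conjNormal with hφ
  -- N is in the kernel of φ
  have hNker : ∀ m : P, m ∈ N → φ m = 1 := by
    intro m hm
    letI : CommGroup ↥N := IsCyclic.commGroup
    apply MulEquiv.ext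
    intro x
    simp only [MulAut.one_apply]
    apply Subtype.ext
    rw [hφ, MulAut.conjNormal_apply]
    have hcoe : m * (x : P) = (x : P) * m := congrArg Subtype.val (mul_comm (⟨m, hm⟩ : N) x)
    rw [hcoe]
    group
  haveI hRfin : Finite ↥φ.range := Finite.of_surjective _ φ.rangeRestrict_surjective
  set ψq : P ⧸ N →* MulAut N := QuotientGroup.lift N φ hNker with hψq
  have hrange : ψq.range = φ.range := by
    ext α
    constructor
    · rintro ⟨q, rfl⟩
      obtain ⟨g, rfl⟩ := QuotientGroup.mk_surjective q
      exact ⟨g, rfl⟩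
    · rintro ⟨g, rfl⟩
      exact ⟨(g : P ⧸ N), rfl⟩
  haveI hRcyc : IsCyclic ↥φ.range := by
    rw [← hrange]
    exact isCyclic_of_surjective ψq.rangeRestrict ψq.rangeRestrict_surjective
  have hRp : IsPGroup p ↥φ.range :=
    IsPGroup.of_surjective hP φ.rangeRestrict φ.rangeRestrict_surjective
  obtain ⟨σ', hσ'⟩ := hRcyc.exists_generator
  -- σ' is nontrivial, since otherwise P would be abelian
  have hσ'ne : σ' ≠ 1 := by
    intro hone
    apply hnab
    have hcenter : N ≤ Subgroup.center P := by
      intro n hn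
      rw [Subgroup.mem_center_iff]
      intro g
      have h1 : φ g ∈ φ.range := ⟨g, rfl⟩
      obtain ⟨z, hz⟩ := hσ' ⟨φ g, h1⟩
      have hz' : (1 : ↥φ.range) ^ z = ⟨φ g, h1⟩ := by rw [← hone]; exact hz
      rw [one_zpow] at hz'
      have hφg : φ g = 1 := by
        have := congrArg Subtype.val hz'
        simpa using this.symm
      have hfix : g * n * g⁻¹ = n := by
        have := congrArg Subtype.val (congrArg (fun α => (α : MulAut N) ⟨n, hn⟩) hφg)
        simpa [hφ] using this
      calc g * n = (g * n * g⁻¹) * g := by group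
        _ = n * g := by rw [hfix]
    have hsur : Function.Surjective
        (QuotientGroup.map N (Subgroup.center P) (MonoidHom.id P) (by simpa using hcenter)) := by
      intro x
      obtain ⟨g, rfl⟩ := QuotientGroup.mk_surjective x
      exact ⟨((g : P ⧸ N)), rfl⟩
    haveI : IsCyclic (P ⧸ Subgroup.center P) := isCyclic_of_surjective _ hsur
    exact commutative_of_cyclic_center_quotient (QuotientGroup.mk' (Subgroup.center P))
      (by rw [QuotientGroup.ker_mk'])
  -- order of σ'
  obtain ⟨k, hk⟩ := (IsPGroup.iff_orderOf.mp hRp) σ'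
  have hk1 : 1 ≤ k := by
    rcases Nat.eq_zero_or_pos k with h | h
    · exact absurd (orderOf_eq_one_iff.mp (by rw [hk, h, pow_zero])) hσ'ne
    · exact h
  set σ : MulAut N := (σ' : MulAut N) with hσdef
  have hσord : orderOf σ = p ^ k := by
    rw [← hk]
    exact orderOf_injective φ.range.subtype Subtype.coe_injective σ'
  obtain ⟨r, hr⟩ := IsPGroup.exists_card_eq (IsPGroup.to_subgroup hP N)
  obtain ⟨χ, g₀, hgen, hχord⟩ := char_exists hNcyc
  have hg₀ord : orderOf g₀ = p ^ r := by
    rw [orderOf_eq_card_of_forall_mem_zpowers hgen, hr]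
  obtain ⟨u, hu⟩ : ∃ u : ℕ, g₀ ^ u = σ g₀ :=
    (Submonoid.mem_powers_iff _ _).mp ((mem_powers_iff_mem_zpowers).mpr (hgen (σ g₀)))
  have hupow : ∀ (j : ℕ) (x : N), (σ ^ j) x = x ^ (u ^ j) := by
    have hux : ∀ x : N, σ x = x ^ u := by
      intro x
      obtain ⟨m, hm⟩ := hgen x
      have hm' : g₀ ^ m = x := hm
      calc σ x = σ (g₀ ^ m) := by rw [hm']
        _ = (σ g₀) ^ m := map_zpow σ g₀ m
        _ = (g₀ ^ u) ^ m := by rw [← hu]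
        _ = (g₀ ^ m) ^ u := by
            rw [← zpow_natCast g₀ u, ← zpow_mul, mul_comm, zpow_mul, zpow_natCast]
        _ = x ^ u := by rw [hm']
    intro j
    induction j with
    | zero => intro x; simp
    | succ j ih =>
      intro x
      rw [pow_succ']
      have hmm : (σ * σ ^ j) x = σ ((σ ^ j) x) := rfl
      rw [hmm, ih x, hux (x ^ u ^ j), ← pow_mul]
      rw [← pow_succ]
  -- congruences for u
  have hcong1 : u ^ p ^ k ≡ 1 [MOD p ^ r] := by
    have hσpk : σ ^ p ^ k = 1 := by
      rw [← hσord]; exact pow_orderOf_eq_one σ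
    have h0 := hupow (p ^ k) g₀
    rw [hσpk] at h0
    have hfix : g₀ ^ (u ^ p ^ k) = g₀ ^ 1 := by
      rw [pow_one, ← h0]; rfl
    have := (pow_eq_pow_iff_modEq).mp hfix
    rwa [hg₀ord] at this
  have hcong2 : ¬ (u ^ p ^ (k-1) ≡ 1 [MOD p ^ r]) := by
    intro hcon
    have hne : σ ^ p ^ (k - 1) ≠ 1 := by
      apply pow_ne_one_of_lt_orderOf
      · exact (Nat.pow_pos hp.pos).ne'
      · rw [hσord]
        exact Nat.pow_lt_pow_right hp.one_lt (by omega)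
    apply hne
    apply MulEquiv.ext
    intro x
    simp only [MulAut.one_apply]
    obtain ⟨m, hm⟩ := hgen x
    have hm' : g₀ ^ m = x := hm
    have hfix : (σ ^ p ^ (k-1)) g₀ = g₀ := by
      rw [hupow]
      have h1 : u ^ p ^ (k-1) ≡ 1 [MOD orderOf g₀] := by rwa [hg₀ord]
      have := (pow_eq_pow_iff_modEq (x := g₀)).mpr h1
      simpa using this
    calc (σ ^ p ^ (k-1)) x = (σ ^ p ^ (k-1)) (g₀ ^ m) := by rw [hm']
      _ = ((σ ^ p ^ (k-1)) g₀) ^ m := by rw [map_zpow]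
      _ = x := by rw [hfix, hm']
  have hr1 : 1 ≤ r := by
    by_contra h
    apply hcong2
    have : r = 0 := by omega
    simp [this, Nat.modEq_one]
  have hu1 : 1 ≤ u := by
    by_contra h
    have hu0 : u = 0 := by omega
    rw [hu0, zero_pow (pow_pos hp.pos k).ne'] at hcong1
    have hdd := (Nat.modEq_iff_dvd' (by norm_num)).mp hcong1
    simp only [Nat.sub_zero] at hdd
    have hpr : p ^ r = 1 := Nat.dvd_one.mp hdd
    have : 2 ≤ p ^ r := by
      calc 2 ≤ p := hp.two_le
        _ = p ^ 1 := (pow_one p).symm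
        _ ≤ p ^ r := Nat.pow_le_pow_right hp.pos hr1
    omega
  -- number-theoretic input
  have h1' : (p:ℤ)^r ∣ (u:ℤ) ^ p ^ k - 1 := by
    have := (Nat.modEq_iff_dvd).mp hcong1
    rw [dvd_sub_comm] at this
    push_cast at this
    convert this using 1
  have h2' : ¬ (p:ℤ)^r ∣ (u:ℤ) ^ p ^ (k-1) - 1 := by
    intro hdvd
    apply hcong2
    rw [Nat.modEq_iff_dvd]
    rw [dvd_sub_comm]
    push_cast
    convert hdvd using 1
  obtain ⟨hdvdA, hndvdB⟩ := nt_aux p r k hp hodd hk1 (u:ℤ) h1' h2'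
  -- the character lam
  set a : ℕ := p ^ (k - 1) with ha
  set lam : N →* ℂˣ := (powMonoidHom a).comp χ with hlam
  have hlam_apply : ∀ x : N, lam x = (χ x) ^ a := fun x => rfl
  have hpowmod : ∀ (z : ℂˣ), z ^ p ^ r = 1 → ∀ s t : ℕ, s ≡ t [MOD p ^ r] → z ^ s = z ^ t := by
    intro z hz s t hst
    have hdvd : orderOf z ∣ p ^ r := orderOf_dvd_of_pow_eq_one hz
    exact pow_eq_pow_iff_modEq.mpr (hst.of_dvd hdvd)
  have hxord : ∀ x : N, (χ x) ^ p ^ r = 1 := by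
    intro x
    rw [← map_pow]
    have : x ^ p ^ r = 1 := by rw [← hr]; exact pow_card_eq_one'
    rw [this, map_one]
  have claim1 : ∀ x : N, lam ((σ ^ p) x) = lam x := by
    intro x
    have hmod : a * u ^ p ≡ a * 1 [MOD p ^ r] := by
      rw [Nat.modEq_iff_dvd, ha]
      push_cast
      rw [show ((p:ℤ)^(k-1) * 1 - (p:ℤ)^(k-1) * (u:ℤ)^p) = -((p:ℤ)^(k-1) * ((u:ℤ)^p - 1)) by ring]
      exact dvd_neg.mpr hdvdA
    calc lam ((σ ^ p) x) = (χ x) ^ (a * u ^ p) := by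
          rw [hupow p x, hlam_apply, map_pow, ← pow_mul, Nat.mul_comm]
      _ = (χ x) ^ (a * 1) := hpowmod _ (hxord x) _ _ hmod
      _ = lam x := by rw [Nat.mul_one, hlam_apply]
  have claim2 : lam (σ g₀) ≠ lam g₀ := by
    intro hcon
    have e1 : lam (σ g₀) = (χ g₀) ^ (a * u) := by
      rw [← hu, hlam_apply, map_pow, ← pow_mul, Nat.mul_comm]
    have e2 : lam g₀ = (χ g₀) ^ (a * 1) := by rw [Nat.mul_one, hlam_apply]
    rw [e1, e2] at hcon
    have hmod := pow_eq_pow_iff_modEq.mp hcon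
    rw [hχord, hr] at hmod
    apply hndvdB
    have hdd := (Nat.modEq_iff_dvd).mp hmod
    rw [ha] at hdd
    push_cast at hdd
    rw [show ((p:ℤ)^(k-1) * 1 - (p:ℤ)^(k-1) * (u:ℤ)) = -((p:ℤ)^(k-1) * ((u:ℤ) - 1)) by ring] at hdd
    exact dvd_neg.mp hdd
  -- the stabilizer subgroup inside MulAut N
  set T : Subgroup (MulAut N) :=
    { carrier := {α : MulAut N | ∀ x : N, lam (α x) = lam x}
      one_mem' := fun _ => rfl
      mul_mem' := by
        intro α β hα hβ x
        have h1 : (α * β) x = α (β x) := rfl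
        rw [h1, hα (β x), hβ x]
      inv_mem' := by
        intro α hα x
        have h1 := hα (α⁻¹ x)
        rw [MulAut.apply_inv_self N α x] at h1
        exact h1.symm } with hT
  refine ⟨lam, ?_⟩
  suffices hsuf : ∀ (S : Subgroup P),
      (∀ g : P, g ∈ S ↔ ∀ n : N, lam ⟨g * (n : P) * g⁻¹, hN.conj_mem n n.2 g⟩ = lam n) →
      S.index = p by
    exact hsuf _ (fun g => Iff.rfl)
  intro S hS
  have hφapp : ∀ (g : P) (n : N), (⟨g * (n : P) * g⁻¹, hN.conj_mem n n.2 g⟩ : N) = φ g n :=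
    fun g n => Subtype.ext (by rw [hφ, MulAut.conjNormal_apply])
  have hSeq : S = T.comap φ := by
    apply SetLike.ext
    intro g
    rw [hS g, Subgroup.mem_comap]
    have : (φ g ∈ T) ↔ ∀ n : N, lam ((φ g) n) = lam n := Iff.rfl
    rw [this]
    exact forall_congr' fun n => by rw [hφapp g n]
  rw [hSeq, Subgroup.index_comap]
  show (T.subgroupOf φ.range).index = p
  apply index_eq_p p hp σ' hσ'
  · rw [Subgroup.mem_subgroupOf]
    have hcoe : ((σ' ^ p : ↥φ.range) : MulAut N) = σ ^ p := SubmonoidClass.coe_pow σ' p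
    show ((σ' ^ p : ↥φ.range) : MulAut N) ∈ T
    rw [hcoe]
    exact claim1
  · intro hmem
    rw [Subgroup.mem_subgroupOf] at hmem
    exact claim2 (hmem g₀)
end

section
/- Let p be an odd prime, let C be a finite cyclic p-group, let A be a p-subgroup of the automorphism group Aut(C), and let theta : C -> C^x be a group homomorphism whose orbit under the action of A has cardinality p^a with a >= 1. Then the orbit of the homomorphism theta^p (the pointwise p-th power of theta) under A has cardinality exactly p^{a-1}. -/
private lemma card_range_eq_index' {G X : Type*} [Group G] (f : G → X) (H : Subgroup G)
    (h : ∀ σ τ : G, f σ = f τ ↔ σ⁻¹ * τ ∈ H) :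
    Nat.card (Set.range f) = H.index := by
  have hset : QuotientGroup.leftRel H = Setoid.ker f := by
    ext σ τ
    rw [QuotientGroup.leftRel_apply]
    rw [Setoid.ker_def]
    exact (h σ τ).symm
  have e : (G ⧸ H) ≃ Set.range f := by
    refine Equiv.trans ?_ (Setoid.quotientKerEquivRange f)
    exact Quotient.congrRight fun a b => by rw [hset]
  rw [Subgroup.index, Nat.card_congr e]

private lemma lte_step' {p : ℕ} (hp : p.Prime) (hodd : Odd p) {u : ℤ} {m : ℕ}
    (h1 : (p : ℤ) ∣ u - 1) (hm : (p : ℤ) ^ m ∣ u ^ p - 1) :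
    (p : ℤ) ^ (m - 1) ∣ u - 1 := by
  rcases eq_or_ne u 1 with rfl | hu
  · simp
  have hpu : ¬ (p : ℤ) ∣ u := by
    intro hdvd
    have h2 : (p : ℤ) ∣ 1 := by
      have := dvd_sub hdvd h1
      simpa using this
    have := Int.le_of_dvd one_pos h2
    have := hp.one_lt
    omega
  have key := Int.emultiplicity_pow_sub_pow hp hodd (by simpa using h1) hpu p
  have h2 : (m : ℕ∞) ≤ emultiplicity ((p : ℤ)) (u ^ p - 1 ^ p) := by
    rw [one_pow]; exact le_emultiplicity_of_pow_dvd hm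
  rw [key] at h2
  have hone : emultiplicity p p = 1 := by
    simpa using emultiplicity_pow_self_of_prime hp.prime 1
  rw [hone] at h2
  have h3 : ((m - 1 : ℕ) : ℕ∞) ≤ emultiplicity ((p : ℤ)) (u - 1) := by
    cases h4 : emultiplicity ((p : ℤ)) (u - 1) with
    | top => exact le_top
    | coe t =>
      rw [h4] at h2
      have : (m : ℕ∞) ≤ ((t + 1 : ℕ) : ℕ∞) := by exact_mod_cast h2
      have := Nat.cast_le.mp this
      exact_mod_cast Nat.cast_le.mpr (by omega : m - 1 ≤ t)
  exact pow_dvd_of_le_emultiplicity h3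

private lemma prime_dvd_sub_one' {p : ℕ} (hp : p.Prime) {u : ℤ} {k : ℕ}
    (h : (p : ℤ) ∣ u ^ p ^ k - 1) : (p : ℤ) ∣ u - 1 := by
  haveI : Fact p.Prime := ⟨hp⟩
  have h1 : ((u : ZMod p)) ^ p ^ k = 1 := by
    have h0 := (ZMod.intCast_zmod_eq_zero_iff_dvd _ p).mpr h
    push_cast at h0
    rwa [sub_eq_zero] at h0
  have h2 : ∀ j : ℕ, ((u : ZMod p)) ^ p ^ j = (u : ZMod p) := by
    intro j
    induction j with
    | zero => simp
    | succ n ih => rw [pow_succ, pow_mul, ih, ZMod.pow_card]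
  have h3 : (u : ZMod p) = 1 := by rw [← h2 k, h1]
  refine (ZMod.intCast_zmod_eq_zero_iff_dvd (u - 1) p).mp ?_
  push_cast [h3]
  ring


private lemma exists_notMem_pow_mem' {p : ℕ} (hp : p.Prime) {G : Type*} [Group G] [Finite G]
    (hG : IsPGroup p G) {H : Subgroup G} (hH : H ≠ ⊤) :
    ∃ σ : G, σ ∉ H ∧ σ ^ p ∈ H := by
  haveI : Fact p.Prime := ⟨hp⟩
  haveI : Group.IsNilpotent G := hG.isNilpotent
  have hlt : H < Subgroup.normalizer (H : Set G) :=
    normalizerCondition_of_isNilpotent H (lt_top_iff_ne_top.mpr hH)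
  obtain ⟨x, hxN, hxH⟩ := SetLike.exists_of_lt hlt
  set N := Subgroup.normalizer (H : Set G) with hNdef
  haveI : (H.subgroupOf N).Normal := Subgroup.normal_in_normalizer
  set y : N := ⟨x, hxN⟩ with hy
  have hyK : y ∉ H.subgroupOf N := by simpa [Subgroup.mem_subgroupOf] using hxH
  set π := QuotientGroup.mk' (H.subgroupOf N) with hπ
  have hq1 : π y ≠ 1 := by
    simpa [hπ, QuotientGroup.eq_one_iff] using hyK
  obtain ⟨s, hs⟩ := ((hG.to_subgroup N).to_quotient (H.subgroupOf N)) (π y)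
  obtain ⟨t, hts, hordq⟩ := (Nat.dvd_prime_pow hp).mp (orderOf_dvd_of_pow_eq_one hs)
  have ht0 : t ≠ 0 := by
    intro h0
    rw [h0, pow_zero] at hordq
    exact hq1 (orderOf_eq_one_iff.mp hordq)
  set z : N := y ^ p ^ (t - 1) with hz
  have hzmk : π z = (π y) ^ p ^ (t - 1) := by rw [hz, map_pow]
  have hzne : z ∉ H.subgroupOf N := by
    intro hmem
    have h1 : π z = 1 := by simpa [hπ, QuotientGroup.eq_one_iff] using hmem
    rw [hzmk] at h1
    have h2 := orderOf_dvd_of_pow_eq_one h1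
    rw [hordq] at h2
    have := (Nat.pow_dvd_pow_iff_le_right hp.one_lt).mp h2
    omega
  have hzp : z ^ p ∈ H.subgroupOf N := by
    have h1 : π (z ^ p) = 1 := by
      rw [map_pow, hzmk, ← pow_mul, ← pow_succ]
      have : t - 1 + 1 = t := by omega
      rw [this, ← hordq, pow_orderOf_eq_one]
    rwa [hπ, QuotientGroup.mk'_apply, QuotientGroup.eq_one_iff] at h1
  refine ⟨(z : G), ?_, ?_⟩
  · intro h
    exact hzne (by simpa [Subgroup.mem_subgroupOf] using h)
  · have := hzp
    rw [Subgroup.mem_subgroupOf] at this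
    simpa using this


/-- Let `p` be an odd prime, `C` a finite cyclic `p`-group,
`A` a `p`-subgroup of `Aut(C)` and `theta : C → ℂˣ` a homomorphism whose orbit
under `A` (acting by `σ • θ = θ ∘ σ⁻¹`) has cardinality `p ^ a` with `a ≥ 1`.
Then the orbit of the pointwise `p`-th power `theta ^ p` under `A` has cardinality
exactly `p ^ (a - 1)`. -/
theorem orbit_card_of_pow_p
    (p : ℕ) (hp : p.Prime) (hodd : Odd p)
    (C : Type*) [Group C] [Finite C] [IsCyclic C] (hC : IsPGroup p C)
    (A : Subgroup (MulAut C)) (hA : IsPGroup p A)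
    (theta : C →* ℂˣ) (a : ℕ) (ha : 1 ≤ a)
    (horb : Nat.card
      (Set.range fun σ : A => theta.comp ((σ : MulAut C)⁻¹ : MulAut C).toMonoidHom)
        = p ^ a) :
    Nat.card
      (Set.range fun σ : A => (theta ^ p).comp ((σ : MulAut C)⁻¹ : MulAut C).toMonoidHom)
        = p ^ (a - 1) := by
  classical
  haveI : Fact p.Prime := ⟨hp⟩
  haveI : Finite (MulAut C) := Finite.of_injective (fun e => (e : C → C)) fun a b h => by
    apply MulEquiv.ext; exact fun x => congrFun h x
  obtain ⟨c, hc⟩ := IsCyclic.exists_generator (α := C)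
  -- exponent function
  have hex : ∀ σ : A, ∃ u : ℤ, ∀ x : C, (σ : MulAut C) x = x ^ u := by
    intro σ
    obtain ⟨u, hu⟩ := Subgroup.mem_zpowers_iff.mp (hc ((σ : MulAut C) c))
    refine ⟨u, fun x => ?_⟩
    obtain ⟨j, hj⟩ := Subgroup.mem_zpowers_iff.mp (hc x)
    rw [← hj, map_zpow, ← hu, ← zpow_mul, mul_comm, zpow_mul]
  choose e he using hex
  set ζ : ℂˣ := theta c with hζ
  set D : ℕ := orderOf ζ with hD
  obtain ⟨k0, hk0⟩ := hC c
  have hζfin : ζ ^ (p ^ k0) = 1 := by rw [hζ, ← map_pow, hk0, map_one]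
  obtain ⟨m, hmle, hDm⟩ := (Nat.dvd_prime_pow hp).mp (orderOf_dvd_of_pow_eq_one hζfin)
  have hzD : ∀ i : ℤ, ζ ^ i = 1 ↔ ((i : ZMod D) = 0) := by
    intro i
    rw [← orderOf_dvd_iff_zpow_eq_one, ZMod.intCast_zmod_eq_zero_iff_dvd]
  have hzEq : ∀ i j : ℤ, ζ ^ i = ζ ^ j ↔ ((i : ZMod D) = (j : ZMod D)) := by
    intro i j
    rw [show (ζ ^ i = ζ ^ j) ↔ ζ ^ (i - j) = 1 by
          rw [sub_eq_add_neg, zpow_add, zpow_neg, mul_inv_eq_one], hzD]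
    push_cast
    rw [sub_eq_zero]
  set E : A → ZMod D := fun σ => ((e σ : ℤ) : ZMod D) with hE
  have hext : ∀ ψ₁ ψ₂ : C →* ℂˣ, ψ₁ c = ψ₂ c → ψ₁ = ψ₂ := by
    intro ψ₁ ψ₂ h
    ext x
    obtain ⟨j, hj⟩ := Subgroup.mem_zpowers_iff.mp (hc x)
    rw [← hj, map_zpow, map_zpow, h]
  -- group-iso facts about E
  have hcpow : ∀ i j : ℤ, c ^ i = c ^ j → ((i : ZMod D) = (j : ZMod D)) := by
    intro i j h
    refine (hzEq i j).mp ?_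
    rw [hζ, ← map_zpow, ← map_zpow, h]
  have hEmul : ∀ σ τ : A, E (σ * τ) = E σ * E τ := by
    intro σ τ
    have h1 : c ^ (e (σ * τ)) = c ^ (e σ * e τ) := by
      have h2 := he (σ * τ) c
      have h3 : ((↑(σ * τ) : MulAut C)) c = (σ : MulAut C) ((τ : MulAut C) c) := rfl
      rw [h3, he τ c, map_zpow, he σ c, ← zpow_mul] at h2
      rw [← h2]
    have := hcpow _ _ h1
    simpa [hE] using this
  have hE1 : E 1 = 1 := by
    have h1 : c ^ (e 1) = c ^ (1 : ℤ) := by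
      have h2 := he 1 c
      have h3 : ((↑(1 : A) : MulAut C)) c = c := rfl
      rw [h3] at h2
      rw [← h2, zpow_one]
    simpa [hE] using hcpow _ _ h1
  have hEinv : ∀ σ : A, E σ⁻¹ * E σ = 1 := by
    intro σ
    rw [← hEmul, inv_mul_cancel, hE1]
  have hEpow : ∀ (n : ℕ) (σ : A), E (σ ^ n) = (E σ) ^ n := by
    intro n σ
    induction n with
    | zero => simpa using hE1
    | succ k ih => rw [pow_succ, hEmul, ih, pow_succ]
  -- the two stabilizer subgroups
  set Hs : Subgroup A :=
    { carrier := {σ : A | E σ = 1}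
      one_mem' := hE1
      mul_mem' := fun {σ τ} hσ hτ => by
        simp only [Set.mem_setOf_eq] at *
        rw [hEmul, hσ, hτ, one_mul]
      inv_mem' := fun {σ} hσ => by
        simp only [Set.mem_setOf_eq] at *
        rw [← hEinv σ, hσ, mul_one] } with hHs
  set Hp : Subgroup A :=
    { carrier := {σ : A | (p : ZMod D) * (E σ - 1) = 0}
      one_mem' := by simp [hE1]
      mul_mem' := fun {σ τ} hσ hτ => by
        simp only [Set.mem_setOf_eq] at *
        rw [hEmul]
        linear_combination (E τ) * hσ + hτ
      inv_mem' := fun {σ} hσ => by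
        simp only [Set.mem_setOf_eq] at *
        have h2 := hEinv σ
        linear_combination (-(E σ⁻¹)) * hσ + (p : ZMod D) * h2 } with hHp
  have hmemHs : ∀ σ : A, σ ∈ Hs ↔ E σ = 1 := fun σ => Iff.rfl
  have hmemHp : ∀ σ : A, σ ∈ Hp ↔ (p : ZMod D) * (E σ - 1) = 0 := fun σ => Iff.rfl
  -- values of the orbit maps at the generator
  have happ : ∀ σ : A, (theta.comp ((σ : MulAut C)⁻¹ : MulAut C).toMonoidHom) c
      = ζ ^ (e σ⁻¹) := by
    intro σ
    have h1 : ((σ⁻¹ : A) : MulAut C) c = c ^ (e σ⁻¹) := he σ⁻¹ c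
    simp only [MonoidHom.comp_apply, MulEquiv.coe_toMonoidHom]
    rw [show ((σ : MulAut C)⁻¹ : MulAut C) c = ((σ⁻¹ : A) : MulAut C) c from rfl, h1,
      map_zpow, hζ]
  -- orbit description for theta
  have hiff1 : ∀ σ τ : A,
      (theta.comp ((σ : MulAut C)⁻¹ : MulAut C).toMonoidHom
        = theta.comp ((τ : MulAut C)⁻¹ : MulAut C).toMonoidHom) ↔ σ⁻¹ * τ ∈ Hs := by
    intro σ τ
    rw [hmemHs, hEmul]
    constructor
    · intro h
      have h2 := congrArg (fun ψ : C →* ℂˣ => ψ c) h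
      simp only [happ] at h2
      have h3 : E σ⁻¹ = E τ⁻¹ := by simpa [hE] using (hzEq _ _).mp h2
      calc E σ⁻¹ * E τ = E τ⁻¹ * E τ := by rw [h3]
        _ = 1 := hEinv τ
    · intro h
      apply hext
      rw [happ, happ]
      refine (hzEq _ _).mpr ?_
      have h3 : E σ⁻¹ = E τ⁻¹ := by
        calc E σ⁻¹ = E σ⁻¹ * (E τ * E τ⁻¹) := by
              rw [mul_comm (E τ), hEinv τ, mul_one]
          _ = (E σ⁻¹ * E τ) * E τ⁻¹ := by ring
          _ = E τ⁻¹ := by rw [h, one_mul]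
      simpa [hE] using h3
  have horb1 : Hs.index = p ^ a := by
    rw [← card_range_eq_index' _ Hs hiff1]
    exact horb
  -- orbit description for theta ^ p
  have happp : ∀ σ : A, ((theta ^ p).comp ((σ : MulAut C)⁻¹ : MulAut C).toMonoidHom) c
      = ζ ^ (e σ⁻¹ * (p : ℤ)) := by
    intro σ
    simp only [MonoidHom.comp_apply, MulEquiv.coe_toMonoidHom, MonoidHom.pow_apply]
    rw [show ((σ : MulAut C)⁻¹ : MulAut C) c = ((σ⁻¹ : A) : MulAut C) c from rfl,
      he σ⁻¹ c, map_zpow, ← hζ, ← zpow_natCast, ← zpow_mul]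
  have hiffp : ∀ σ τ : A,
      ((theta ^ p).comp ((σ : MulAut C)⁻¹ : MulAut C).toMonoidHom
        = (theta ^ p).comp ((τ : MulAut C)⁻¹ : MulAut C).toMonoidHom) ↔ σ⁻¹ * τ ∈ Hp := by
    intro σ τ
    rw [hmemHp, hEmul]
    constructor
    · intro h
      have h2 := congrArg (fun ψ : C →* ℂˣ => ψ c) h
      simp only [happp] at h2
      have h3 : E σ⁻¹ * (p : ZMod D) = E τ⁻¹ * (p : ZMod D) := by
        have h4 := (hzEq _ _).mp h2
        push_cast at h4
        simpa [hE] using h4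
      linear_combination (E τ) * h3 + (p : ZMod D) * hEinv τ
    · intro h
      apply hext
      rw [happp, happp]
      refine (hzEq _ _).mpr ?_
      push_cast
      show (E σ⁻¹) * (p : ZMod D) = (E τ⁻¹) * (p : ZMod D)
      linear_combination (E τ⁻¹) * h + (-(p : ZMod D) * E σ⁻¹) * hEinv τ
  rw [card_range_eq_index' _ Hp hiffp]
  -- now prove Hp.index = p ^ (a - 1)
  have hle : Hs ≤ Hp := by
    intro σ hσ
    rw [hmemHs] at hσ
    rw [hmemHp, hσ]
    ring
  have hsne : Hs ≠ ⊤ := by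
    intro htop
    rw [htop, Subgroup.index_top] at horb1
    have := Nat.one_lt_pow (by omega : a ≠ 0) hp.one_lt
    omega
  have hm1 : 1 ≤ m := by
    by_contra hm0
    have hD1 : D = 1 := by
      rw [hD, hDm]
      interval_cases m
      · rfl
    haveI : Subsingleton (ZMod D) := by rw [hD1]; infer_instance
    exact hsne (by ext σ; simpa [hmemHs] using Subsingleton.elim _ _)
  have hpD : p ∣ D := by
    rw [hD, hDm]
    exact dvd_pow_self p (by omega)
  -- an element of Hp that is not in Hs
  obtain ⟨σ0, hσ0s, hσ0ps⟩ := exists_notMem_pow_mem' hp hA hsne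
  have hDZ : ((p : ℤ)) ^ m = (D : ℤ) := by
    rw [hD, hDm]
    push_cast
    ring
  have hu1 : (p : ℤ) ∣ e σ0 - 1 := by
    obtain ⟨k, hk⟩ := hA σ0
    have h1 : (E σ0) ^ (p ^ k) = 1 := by rw [← hEpow, hk, hE1]
    have h2 : (D : ℤ) ∣ (e σ0) ^ (p ^ k) - 1 := by
      refine (ZMod.intCast_zmod_eq_zero_iff_dvd _ D).mp ?_
      push_cast
      rw [sub_eq_zero]
      exact h1
    exact prime_dvd_sub_one' hp ((Int.natCast_dvd_natCast.mpr hpD).trans h2)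
  have hup : (p : ℤ) ^ m ∣ (e σ0) ^ p - 1 := by
    rw [hDZ]
    have h1 : (E σ0) ^ p = 1 := by
      have := hσ0ps
      rw [hmemHs, hEpow] at this
      exact this
    refine (ZMod.intCast_zmod_eq_zero_iff_dvd _ D).mp ?_
    push_cast
    rw [sub_eq_zero]
    exact h1
  have key := lte_step' hp hodd hu1 hup
  have hσ0Hp : σ0 ∈ Hp := by
    rw [hmemHp]
    have hDiv : (D : ℤ) ∣ (p : ℤ) * (e σ0 - 1) := by
      have h5 : (D : ℤ) = (p : ℤ) * (p : ℤ) ^ (m - 1) := by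
        rw [← hDZ, ← pow_succ']
        congr 1
        omega
      rw [h5]
      exact mul_dvd_mul_left _ key
    have h6 := (ZMod.intCast_zmod_eq_zero_iff_dvd _ D).mpr hDiv
    push_cast at h6
    linear_combination h6
  -- relindex computation
  set r := Hs.relIndex Hp with hr
  have hmulri : r * Hp.index = p ^ a := by rw [hr, Subgroup.relIndex_mul_index hle, horb1]
  have hrne : r ≠ 1 := by
    intro h1
    have h2 : Hs.subgroupOf Hp = ⊤ := Subgroup.index_eq_one.mp h1
    have h3 : (⟨σ0, hσ0Hp⟩ : Hp) ∈ Hs.subgroupOf Hp := h2 ▸ Subgroup.mem_top _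
    rw [Subgroup.mem_subgroupOf] at h3
    exact hσ0s h3
  have hrle : r ≤ p := by
    haveI : NeZero p := ⟨hp.ne_zero⟩
    have hgmem : ∀ σ : Hp, (ζ ^ (e (σ : A) - 1)) ∈ rootsOfUnity p ℂ := by
      intro σ
      rw [mem_rootsOfUnity]
      have h1 := σ.2
      rw [hmemHp] at h1
      have h2 : (D : ℤ) ∣ (e (σ : A) - 1) * (p : ℤ) := by
        refine (ZMod.intCast_zmod_eq_zero_iff_dvd _ D).mp ?_
        push_cast
        linear_combination h1
      rw [← zpow_natCast, ← zpow_mul]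
      exact (hzD _).mpr ((ZMod.intCast_zmod_eq_zero_iff_dvd _ D).mpr h2)
    set g : Hp → rootsOfUnity p ℂ := fun σ => ⟨ζ ^ (e (σ : A) - 1), hgmem σ⟩ with hg
    have hgiff : ∀ σ τ : Hp, g σ = g τ ↔ σ⁻¹ * τ ∈ Hs.subgroupOf Hp := by
      intro σ τ
      rw [Subgroup.mem_subgroupOf]
      have h5 : ((σ⁻¹ * τ : Hp) : A) = (σ : A)⁻¹ * (τ : A) := rfl
      rw [h5, hmemHs, hEmul]
      constructor
      · intro h
        have h2 : ζ ^ (e (σ : A) - 1) = ζ ^ (e (τ : A) - 1) :=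
          congrArg (fun x : rootsOfUnity p ℂ => (x : ℂˣ)) h
        have h3 := (hzEq _ _).mp h2
        push_cast at h3
        have h4 : E (σ : A) = E (τ : A) := by
          simp only [hE]
          linear_combination h3
        rw [← h4]
        exact hEinv _
      · intro h
        apply Subtype.ext
        show ζ ^ (e (σ : A) - 1) = ζ ^ (e (τ : A) - 1)
        refine (hzEq _ _).mpr ?_
        push_cast
        show E (σ : A) - 1 = E (τ : A) - 1
        linear_combination (-(E (σ : A))) * h + (E (τ : A)) * hEinv (σ : A)
    have hinj : Function.Injective (fun q : (Hp ⧸ Hs.subgroupOf Hp) =>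
        Quotient.liftOn' q g (fun σ τ hrel =>
          (hgiff σ τ).mpr (QuotientGroup.leftRel_apply.mp hrel))) := by
      intro q1 q2 hq
      induction q1 using Quotient.inductionOn'
      induction q2 using Quotient.inductionOn'
      simp only [Quotient.liftOn'_mk''] at hq
      exact Quotient.sound' (QuotientGroup.leftRel_apply.mpr ((hgiff _ _).mp hq))
    have hcard : r = Nat.card (Hp ⧸ Hs.subgroupOf Hp) := rfl
    rw [hcard]
    calc Nat.card (Hp ⧸ Hs.subgroupOf Hp) ≤ Nat.card (rootsOfUnity p ℂ) :=
          Nat.card_le_card_of_injective _ hinj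
      _ = p := by rw [Complex.card_rootsOfUnity]
  obtain ⟨j, hja, hrj⟩ := (Nat.dvd_prime_pow hp).mp ⟨Hp.index, hmulri.symm⟩
  have hj1 : j = 1 := by
    have h1 : j ≠ 0 := fun h0 => hrne (by rw [hrj, h0, pow_zero])
    have h2 : p ^ j ≤ p ^ 1 := by
      rw [← hrj, pow_one]
      exact hrle
    have := (Nat.pow_le_pow_iff_right hp.one_lt).mp h2
    omega
  have hrp : r = p := by rw [hrj, hj1, pow_one]
  have hfinal : p * Hp.index = p * p ^ (a - 1) := by
    calc p * Hp.index = r * Hp.index := by rw [hrp]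
      _ = p ^ a := hmulri
      _ = p ^ (a - 1 + 1) := by congr 1; omega
      _ = p * p ^ (a - 1) := by rw [pow_succ']
  exact Nat.eq_of_mul_eq_mul_left hp.pos hfinal
end

section
/- Let p be a prime, let D be a finite cyclic group, and let tau and gamma be automorphisms of D such that tau has p-power order and gamma has order prime to p. If lambda : D -> C^x is a group homomorphism satisfying lambda of tau = lambda of gamma (composition of maps), then lambda of tau = lambda; that is, lambda is fixed by tau (and equally by gamma). -/
lemma mulAut_comm_of_isCyclic {D : Type*} [Group D] [IsCyclic D] (τ γ : MulAut D) :
    Commute τ γ := by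
  obtain ⟨g, hg⟩ := IsCyclic.exists_generator (α := D)
  obtain ⟨a, ha⟩ := hg (γ g)
  obtain ⟨b, hb⟩ := hg (τ g)
  have ha' : γ g = g ^ a := ha.symm
  have hb' : τ g = g ^ b := hb.symm
  ext x
  obtain ⟨n, hn⟩ := hg x
  subst hn
  simp only [MulAut.mul_apply, map_zpow, ha', hb', ← zpow_mul]
  ring_nf

/-- Let `p` be a prime, `D` a finite cyclic group, and `τ, γ`
automorphisms of `D` with `τ` of `p`-power order and `γ` of order prime to `p`.
If a homomorphism `lam : D → ℂˣ` satisfies `lam ∘ τ = lam ∘ γ`, then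
`lam ∘ τ = lam`, i.e. `lam` is fixed by `τ`. -/
theorem fixed_by_p_automorphism_of_eq_comp
    (p : ℕ) (hp : p.Prime)
    (D : Type*) [Group D] [Finite D] [IsCyclic D]
    (τ γ : MulAut D) (hτ : ∃ k : ℕ, orderOf τ = p ^ k)
    (hγ : Nat.Coprime (orderOf γ) p)
    (lam : D →* ℂˣ)
    (h : lam.comp τ.toMonoidHom = lam.comp γ.toMonoidHom) :
    lam.comp τ.toMonoidHom = lam := by
  obtain ⟨k, hk⟩ := hτ
  have h' : ∀ d : D, lam (τ d) = lam (γ d) := fun d => DFunLike.congr_fun h d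
  have comm : Commute τ γ := mulAut_comm_of_isCyclic τ γ
  -- iterate: lam ∘ τ^n = lam ∘ γ^n
  have key : ∀ n : ℕ, ∀ d : D, lam ((τ ^ n) d) = lam ((γ ^ n) d) := by
    intro n
    induction n with
    | zero => intro d; simp
    | succ n ih =>
      intro d
      rw [pow_succ, MulAut.mul_apply, ih (τ d)]
      have hc : γ ^ n * τ = τ * γ ^ n := ((comm.symm).pow_left n)
      calc lam ((γ ^ n) (τ d)) = lam ((γ ^ n * τ) d) := rfl
        _ = lam ((τ * γ ^ n) d) := by rw [hc]
        _ = lam (τ ((γ ^ n) d)) := rfl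
        _ = lam (γ ((γ ^ n) d)) := h' _
        _ = lam ((γ ^ n) (γ d)) := by
              rw [← MulAut.mul_apply, ← MulAut.mul_apply, ← pow_succ, ← pow_succ']
        _ = lam ((γ ^ (n + 1)) d) := by rw [pow_succ, MulAut.mul_apply]
  -- at n = p^k : lam = lam ∘ γ^(p^k)
  have hpk : ∀ d : D, lam d = lam ((γ ^ p ^ k) d) := by
    intro d
    have hτ1 : τ ^ p ^ k = 1 := hk ▸ pow_orderOf_eq_one τ
    have := key (p ^ k) d
    rwa [hτ1, MulAut.one_apply] at this
  -- iterate hpk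
  have hiter : ∀ m : ℕ, ∀ d : D, lam d = lam ((γ ^ (p ^ k * m)) d) := by
    intro m
    induction m with
    | zero => intro d; simp
    | succ m ih =>
      intro d
      rw [Nat.mul_succ, pow_add, MulAut.mul_apply, ← ih ((γ ^ p ^ k) d), ← hpk d]
  -- show lam ∘ γ = lam
  have hgoal : ∀ d : D, lam (γ d) = lam d := by
    rcases Nat.lt_or_ge 1 (orderOf γ) with hlt | hle
    · have hco : Nat.Coprime (p ^ k) (orderOf γ) := (hγ.pow_right k).symm
      obtain ⟨m, -, hm⟩ := Nat.exists_mul_mod_eq_one_of_coprime hco hlt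
      intro d
      have hdm : orderOf γ * (p ^ k * m / orderOf γ) + 1 = p ^ k * m := by
        rw [← hm]; exact (Nat.div_add_mod _ _)
      have hpow : γ ^ (p ^ k * m) = γ := by
        rw [← hdm, pow_add, pow_mul, pow_orderOf_eq_one, one_pow, one_mul, pow_one]
      have := hiter m d
      rw [hpow] at this
      exact this.symm
    · have h1 : orderOf γ = 1 := by
        have : 0 < orderOf γ := orderOf_pos γ
        omega
      have : γ = 1 := orderOf_eq_one_iff.mp h1
      intro d; rw [this, MulAut.one_apply]
  ext d
  simp only [MonoidHom.comp_apply, MulEquiv.coe_toMonoidHom]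
  rw [h' d, hgoal d]
end

section
/- Let d be an even positive integer and let a be 3 or 6. Then the wreath product C_d wr S_a, realized as the semidirect product (Z/dZ)^a ⋊ S_a where the symmetric group S_a acts by permuting the a coordinates of (Z/dZ)^a, has an irreducible complex character whose degree is divisible by 3 but not by 9. -/
open CategoryTheory

/-- The permutation action of `S_a` on `(Z/dZ)^a` (written multiplicatively),
permuting the coordinates: `σ • f = f ∘ σ⁻¹`. -/
def permWreathAut (d a : ℕ) :
    Equiv.Perm (Fin a) →* MulAut (Fin a → Multiplicative (ZMod d)) :=
  MonoidHom.mk'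
    (fun σ =>
      { toFun := fun f => f ∘ σ.symm
        invFun := fun f => f ∘ σ
        left_inv := fun f => by
          funext x
          simp
        right_inv := fun f => by
          funext x
          simp
        map_mul' := fun f g => rfl })
    (fun σ τ => MulEquiv.ext fun f => rfl)

/-- The wreath product `C_d ≀ S_a`, realized as the semidirect product
`(Z/dZ)^a ⋊ S_a` where `S_a` permutes the coordinates. -/
abbrev wreathProduct (d a : ℕ) : Type :=
  (Fin a → Multiplicative (ZMod d)) ⋊[permWreathAut d a] Equiv.Perm (Fin a)

noncomputable section WreathAux

def wpSgnFun {d : ℕ} (hd : (2:ℕ) ∣ d) (x : Multiplicative (ZMod d)) : ℂ :=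
  if ZMod.castHom hd (ZMod 2) x.toAdd = 0 then 1 else -1

def wpSgn {d : ℕ} (hd : (2:ℕ) ∣ d) : Multiplicative (ZMod d) →* ℂ where
  toFun := wpSgnFun hd
  map_one' := by unfold wpSgnFun; simp
  map_mul' x y := by
    show wpSgnFun hd (x * y) = wpSgnFun hd x * wpSgnFun hd y
    have key : ∀ u v : ZMod 2, (if u + v = 0 then (1:ℂ) else -1)
        = (if u = 0 then 1 else -1) * (if v = 0 then 1 else -1) := by
      intro u v
      rcases (by decide : ∀ w : ZMod 2, w = 0 ∨ w = 1) u with rfl | rfl <;>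
        rcases (by decide : ∀ w : ZMod 2, w = 0 ∨ w = 1) v with rfl | rfl <;>
        simp [show ((1:ZMod 2) + 1) = 0 from by decide, show (1:ZMod 2) ≠ 0 from by decide]
    unfold wpSgnFun
    rw [show (x * y).toAdd = x.toAdd + y.toAdd from rfl, map_add]
    exact key _ _

lemma wpSgn_sq {d : ℕ} (hd : (2:ℕ) ∣ d) (x : Multiplicative (ZMod d)) :
    wpSgn hd x * wpSgn hd x = 1 := by
  show wpSgnFun hd x * wpSgnFun hd x = 1
  unfold wpSgnFun; split <;> norm_num

lemma wpSgn_gen {d : ℕ} (hd : (2:ℕ) ∣ d) :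
    wpSgn hd (Multiplicative.ofAdd (1 : ZMod d)) = -1 := by
  show wpSgnFun hd _ = -1
  unfold wpSgnFun
  rw [if_neg]
  rw [show (Multiplicative.ofAdd (1 : ZMod d)).toAdd = (1 : ZMod d) from rfl, map_one]
  exact one_ne_zero

/-- 2-element subsets of `Fin a`. -/
abbrev WPairs (a : ℕ) : Type := {s : Finset (Fin a) // s.card = 2}

/-- The character of `(ZMod d)^a` attached to a finset `s`. -/
def wpChi {d : ℕ} (hd : (2:ℕ) ∣ d) {a : ℕ} (s : Finset (Fin a)) :
    (Fin a → Multiplicative (ZMod d)) →* ℂ where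
  toFun f := ∏ i ∈ s, wpSgn hd (f i)
  map_one' := by simp
  map_mul' f g := by simp [Finset.prod_mul_distrib]

lemma wpChi_apply {d : ℕ} (hd : (2:ℕ) ∣ d) {a : ℕ} (s : Finset (Fin a))
    (f : Fin a → Multiplicative (ZMod d)) : wpChi hd s f = ∏ i ∈ s, wpSgn hd (f i) := rfl

/-- The action of a permutation on pairs. -/
def wpAct {a : ℕ} (σ : Equiv.Perm (Fin a)) (S : WPairs a) : WPairs a :=
  ⟨S.1.image σ, by rw [Finset.card_image_of_injective _ σ.injective]; exact S.2⟩

lemma wpAct_one {a : ℕ} (S : WPairs a) : wpAct 1 S = S := by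
  unfold wpAct
  exact Subtype.ext (by simp)

lemma wpAct_mul {a : ℕ} (σ τ : Equiv.Perm (Fin a)) (S : WPairs a) :
    wpAct σ (wpAct τ S) = wpAct (σ * τ) S := by
  unfold wpAct
  simp only [Subtype.mk.injEq, Finset.image_image]
  rfl

lemma wpAct_inv_eq_iff {a : ℕ} (σ : Equiv.Perm (Fin a)) (S T : WPairs a) :
    wpAct σ⁻¹ S = T ↔ S = wpAct σ T := by
  constructor
  · rintro rfl; rw [wpAct_mul, mul_inv_cancel, wpAct_one]
  · rintro rfl; rw [wpAct_mul, inv_mul_cancel, wpAct_one]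

end WreathAux

noncomputable section

variable {d a : ℕ}

lemma wpChi_comp (hd : (2:ℕ) ∣ d) (σ : Equiv.Perm (Fin a)) (s : Finset (Fin a))
    (f : Fin a → Multiplicative (ZMod d)) :
    wpChi hd s (f ∘ σ.symm) = wpChi hd (s.image ⇑σ.symm) f := by
  rw [wpChi_apply, wpChi_apply,
    Finset.prod_image (fun x _ y _ h => σ.symm.injective h)]
  rfl

/-- The monomial representation of the wreath product on `WPairs a → ℂ`. -/
def wpRho (hd : (2:ℕ) ∣ d) (a : ℕ) :
    wreathProduct d a →* ((WPairs a → ℂ) →ₗ[ℂ] (WPairs a → ℂ)) where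
  toFun g :=
    { toFun := fun v S => wpChi hd S.1 g.left * v (wpAct g.right⁻¹ S)
      map_add' := fun v w => by funext S; simp [mul_add]
      map_smul' := fun c v => by funext S; simp [smul_eq_mul]; ring }
  map_one' := by
    apply LinearMap.ext; intro v; funext S
    simp [wpAct_one]
  map_mul' g₁ g₂ := by
    apply LinearMap.ext; intro v; funext S
    have h1 : (g₁ * g₂).left = g₁.left * (permWreathAut d a g₁.right) g₂.left := rfl
    have h2 : (g₁ * g₂).right = g₁.right * g₂.right := rfl
    have h3 : (permWreathAut d a g₁.right) g₂.left = g₂.left ∘ ⇑g₁.right.symm := rfl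
    simp only [LinearMap.coe_mk, AddHom.coe_mk, Module.End.mul_apply, h1, h2, h3, map_mul]
    rw [wpChi_comp]
    have h4 : wpAct (g₁.right * g₂.right)⁻¹ S = wpAct g₂.right⁻¹ (wpAct g₁.right⁻¹ S) := by
      rw [wpAct_mul, mul_inv_rev]
    have h5 : (wpAct g₁.right⁻¹ S).1 = S.1.image ⇑g₁.right.symm := rfl
    rw [h4, h5]
    ring

noncomputable section

/-- A nontrivial character of a finite commutative group sums to zero. -/
lemma sum_char_eq_zero {M : Type*} [CommGroup M] [Fintype M] (ψ : M →* ℂ)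
    (m₀ : M) (h : ψ m₀ ≠ 1) : ∑ m, ψ m = 0 := by
  have h1 : ψ m₀ * ∑ m, ψ m = ∑ m, ψ m := by
    rw [Finset.mul_sum]
    simp_rw [← map_mul]
    exact Fintype.sum_equiv (Equiv.mulLeft m₀) _ _ (fun m => rfl)
  have h2 : (ψ m₀ - 1) * ∑ m, ψ m = 0 := by rw [sub_mul, one_mul, h1, sub_self]
  rcases mul_eq_zero.1 h2 with h3 | h3
  · exact absurd (sub_eq_zero.1 h3) h
  · exact h3

lemma exists_perm_image {a : ℕ} (s t : Finset (Fin a)) (h : s.card = t.card) :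
    ∃ σ : Equiv.Perm (Fin a), s.image ⇑σ = t := by
  have hcard1 : Fintype.card {x // x ∈ s} = Fintype.card {x // x ∈ t} := by
    simp only [Fintype.card_coe, h]
  have hcard2 : Fintype.card {x // ¬ x ∈ s} = Fintype.card {x // ¬ x ∈ t} := by
    rw [Fintype.card_subtype_compl, Fintype.card_subtype_compl]
    simp only [Fintype.card_coe, h]
  let e := Fintype.equivOfCardEq hcard1
  let f := Fintype.equivOfCardEq hcard2
  refine ⟨Equiv.subtypeCongr e f, ?_⟩
  have hsub : s.image ⇑(Equiv.subtypeCongr e f) ⊆ t := by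
    intro y hy
    rcases Finset.mem_image.1 hy with ⟨x, hx, rfl⟩
    have : Equiv.subtypeCongr e f x = (e ⟨x, hx⟩ : Fin a) := by
      simp [Equiv.subtypeCongr, hx]
    rw [this]
    exact (e ⟨x, hx⟩).2
  apply Finset.eq_of_subset_of_card_le hsub
  rw [Finset.card_image_of_injective _ (Equiv.subtypeCongr e f).injective, h]

variable {d a : ℕ}

lemma wp_orth (hd : (2:ℕ) ∣ d) [NeZero d] (S T : WPairs a) :
    ∑ n : (Fin a → Multiplicative (ZMod d)), wpChi hd T.1 n * wpChi hd S.1 n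
      = if S = T then (Fintype.card (Fin a → Multiplicative (ZMod d)) : ℂ) else 0 := by
  by_cases hST : S = T
  · subst hST
    rw [if_pos rfl]
    have : ∀ n : (Fin a → Multiplicative (ZMod d)), wpChi hd S.1 n * wpChi hd S.1 n = 1 := by
      intro n
      rw [wpChi_apply, ← Finset.prod_mul_distrib]
      exact Finset.prod_eq_one fun i _ => wpSgn_sq hd (n i)
    simp [this]
  · rw [if_neg hST]
    have hne : ¬ (T.1 ⊆ S.1) := by
      intro hsub
      exact hST (Subtype.ext (Finset.eq_of_subset_of_card_le hsub (by rw [S.2, T.2])).symm)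
    obtain ⟨i, hiT, hiS⟩ := Finset.not_subset.1 hne
    set n₀ : Fin a → Multiplicative (ZMod d) :=
      fun j => if j = i then Multiplicative.ofAdd (1 : ZMod d) else 1 with hn₀
    have hT : wpChi hd T.1 n₀ = -1 := by
      rw [wpChi_apply]
      rw [Finset.prod_eq_single_of_mem i hiT (fun b _ hb => by simp [hn₀, hb])]
      simp [hn₀, wpSgn_gen hd]
    have hS : wpChi hd S.1 n₀ = 1 := by
      rw [wpChi_apply]
      exact Finset.prod_eq_one fun j hj => by
        have : j ≠ i := fun hji => hiS (hji ▸ hj)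
        simp [hn₀, this]
    have key : (wpChi hd T.1 * wpChi hd S.1) n₀ ≠ 1 := by
      simp only [MonoidHom.mul_apply, hT, hS]
      norm_num
    exact sum_char_eq_zero (wpChi hd T.1 * wpChi hd S.1) n₀ key

lemma wp_submodule_eq_top (hd : (2:ℕ) ∣ d) [NeZero d]
    (W : Submodule ℂ (WPairs a → ℂ))
    (hW : ∀ g v, v ∈ W → wpRho hd a g v ∈ W) (hne : W ≠ ⊥) : W = ⊤ := by
  obtain ⟨w, hwW, hw0⟩ := Submodule.exists_mem_ne_zero_of_ne_bot hne
  obtain ⟨T, hT⟩ : ∃ T, w T ≠ 0 := by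
    by_contra hc
    push_neg at hc
    exact hw0 (funext hc)
  have hsingle : ∀ U : WPairs a, (Pi.single U (1:ℂ) : WPairs a → ℂ) ∈ W := by
    have hTW : (Pi.single T (1:ℂ) : WPairs a → ℂ) ∈ W := by
      set eT : WPairs a → ℂ := Pi.single T (1:ℂ) with heT
      set c : ℂ := (Fintype.card (Fin a → Multiplicative (ZMod d)) : ℂ) * w T with hc
      have hc0 : c ≠ 0 := by
        apply mul_ne_zero _ hT
        exact_mod_cast Fintype.card_ne_zero
      have hu : (∑ n : (Fin a → Multiplicative (ZMod d)),
          wpChi hd T.1 n • wpRho hd a (SemidirectProduct.inl n) w) ∈ W :=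
        Submodule.sum_mem _ fun n _ => Submodule.smul_mem _ _ (hW _ _ hwW)
      have heq : (∑ n : (Fin a → Multiplicative (ZMod d)),
          wpChi hd T.1 n • wpRho hd a (SemidirectProduct.inl n) w) = c • eT := by
        funext S
        have hrho : ∀ n : (Fin a → Multiplicative (ZMod d)),
            wpRho hd a (SemidirectProduct.inl n) w S = wpChi hd S.1 n * w S := by
          intro n
          show wpChi hd S.1 (SemidirectProduct.inl n : wreathProduct d a).left
              * w (wpAct (SemidirectProduct.inl n : wreathProduct d a).right⁻¹ S) = _
          rw [SemidirectProduct.left_inl, SemidirectProduct.right_inl, inv_one, wpAct_one]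
        simp only [Finset.sum_apply, Pi.smul_apply, smul_eq_mul, hrho]
        simp_rw [← mul_assoc, ← Finset.sum_mul]
        rw [wp_orth hd S T]
        show _ = c * (Pi.single T (1:ℂ) : WPairs a → ℂ) S
        rw [Pi.single_apply, hc]
        by_cases hST : S = T
        · subst hST; rw [if_pos rfl, if_pos rfl]; ring
        · rw [if_neg hST, if_neg hST]; ring
      rw [heq] at hu
      have := Submodule.smul_mem W c⁻¹ hu
      rwa [inv_smul_smul₀ hc0] at this
    intro U
    obtain ⟨σ, hσ⟩ := exists_perm_image T.1 U.1 (by rw [T.2, U.2])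
    have hUT : wpAct σ T = U := Subtype.ext hσ
    have hmem := hW (SemidirectProduct.inr σ) _ hTW
    have heq : wpRho hd a (SemidirectProduct.inr σ) (Pi.single T (1:ℂ) : WPairs a → ℂ)
        = (Pi.single U (1:ℂ) : WPairs a → ℂ) := by
      funext S'
      show wpChi hd S'.1 (SemidirectProduct.inr σ : wreathProduct d a).left
          * (Pi.single T (1:ℂ) : WPairs a → ℂ)
              (wpAct (SemidirectProduct.inr σ : wreathProduct d a).right⁻¹ S')
          = (Pi.single U (1:ℂ) : WPairs a → ℂ) S'
      rw [SemidirectProduct.left_inr, SemidirectProduct.right_inr, map_one, one_mul]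
      rw [Pi.single_apply, Pi.single_apply, ← hUT]
      by_cases h : wpAct σ⁻¹ S' = T
      · rw [if_pos h, if_pos ((wpAct_inv_eq_iff σ S' T).1 h)]
      · rw [if_neg h, if_neg (fun hc => h ((wpAct_inv_eq_iff σ S' T).2 hc))]
    rwa [heq] at hmem
  rw [eq_top_iff]
  intro v _
  rw [pi_eq_sum_univ v]
  refine Submodule.sum_mem _ fun U _ => Submodule.smul_mem _ _ ?_
  have : (fun j => if U = j then (1:ℂ) else 0) = (Pi.single U (1:ℂ) : WPairs a → ℂ) := by
    funext j
    rw [Pi.single_apply]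
    simp [eq_comm]
  rw [this]
  exact hsingle U


lemma fdrep_simple_of {k G : Type} [Field k] [Group G] (X : FDRep k G)
    (hnz : ∃ v : X, v ≠ 0)
    (htop : ∀ W : Submodule k X, (∀ (g : G) (v : X), v ∈ W → X.ρ g v ∈ W) → W ≠ ⊥ → W = ⊤) :
    Simple X := by
  constructor
  intro Y f hm
  constructor
  · intro hiso hf0
    obtain ⟨v, hv⟩ := hnz
    apply hv
    have h1 : 𝟙 X = (0 : X ⟶ X) := by
      calc 𝟙 X = inv f ≫ f := (IsIso.inv_hom_id f).symm
        _ = inv f ≫ 0 := congrArg (inv f ≫ ·) hf0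
        _ = 0 := Limits.comp_zero
    have h2 := congrArg Action.Hom.hom h1
    have h3 := ConcreteCategory.congr_hom h2 v
    exact h3.trans rfl
  · intro hf
    have hmono3 : Mono ((forget₂ (FGModuleCat k) (ModuleCat k)).map
        ((Action.forget (FGModuleCat k) (MonCat.of G)).map f)) := inferInstance
    have hinj : Function.Injective f.hom := (ModuleCat.mono_iff_injective _).1 hmono3
    have hfhom : ∃ y : Y, f.hom y ≠ 0 := by
      by_contra hc
      push_neg at hc
      apply hf
      apply Action.Hom.ext
      exact ConcreteCategory.hom_ext _ _ fun y => (hc y).trans rfl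
    obtain ⟨y, hy⟩ := hfhom
    have hne : LinearMap.range f.hom.hom.hom ≠ ⊥ := by
      rw [Submodule.ne_bot_iff]
      exact ⟨f.hom y, ⟨y, rfl⟩, hy⟩
    have hrange : LinearMap.range f.hom.hom.hom = ⊤ := by
      refine htop _ ?_ hne
      rintro g v ⟨x, rfl⟩
      have hcm : f.hom (Y.ρ g x) = X.ρ g (f.hom x) := ConcreteCategory.congr_hom (f.comm g) x
      exact ⟨Y.ρ g x, hcm⟩
    have hbij : Function.Bijective f.hom := ⟨hinj, LinearMap.range_eq_top.1 hrange⟩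
    let e := LinearEquiv.ofBijective f.hom.hom.hom hbij
    have : IsIso f.hom := by
      refine ⟨⟨ModuleCat.ofHom e.symm.toLinearMap⟩, ?_, ?_⟩
      · exact ConcreteCategory.hom_ext _ _ fun x => e.symm_apply_apply x
      · exact ConcreteCategory.hom_ext _ _ fun x => e.apply_symm_apply x
    exact Action.isIso_of_hom_isIso f

theorem wp_main (d : ℕ) (hd2 : (2:ℕ) ∣ d) [NeZero d] (a : ℕ) (ha : 2 ≤ a) :
    ∃ V : FDRep ℂ (wreathProduct d a), Simple V ∧
      Module.finrank ℂ V = Nat.choose a 2 := by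
  refine ⟨FDRep.of (wpRho hd2 a), ?_, ?_⟩
  · obtain ⟨T⟩ : Nonempty (WPairs a) := by
      refine ⟨⟨{⟨0, by omega⟩, ⟨1, by omega⟩}, ?_⟩⟩
      rw [Finset.card_pair]
      intro h
      exact absurd (congrArg Fin.val h) (by simp)
    apply fdrep_simple_of
    · refine ⟨(Pi.single T 1 : WPairs a → ℂ), fun h => ?_⟩
      have h1 := congrFun h T
      have h2 : (1 : ℂ) = 0 := by
        rw [Pi.single_apply] at h1
        rw [if_pos rfl] at h1
        exact h1.trans rfl
      exact one_ne_zero h2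
    · intro W hW hne
      exact wp_submodule_eq_top hd2 W (fun g v hv => hW g v hv) hne
  · show Module.finrank ℂ (WPairs a → ℂ) = Nat.choose a 2
    rw [Module.finrank_pi ℂ, Fintype.card_finset_len 2, Fintype.card_fin]


/-- Let `d` be an even positive integer and `a ∈ {3, 6}`. Then the
wreath product `C_d ≀ S_a` has an irreducible complex representation whose degree is
divisible by `3` but not by `9`. -/
theorem wreath_product_has_character_of_degree_div_three_not_nine
    (d : ℕ) (hd : 0 < d) (hde : Even d) (a : ℕ) (ha : a = 3 ∨ a = 6) :
    ∃ V : FDRep ℂ (wreathProduct d a), Simple V ∧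
      3 ∣ Module.finrank ℂ V ∧ ¬ 9 ∣ Module.finrank ℂ V := by
  haveI : NeZero d := ⟨hd.ne'⟩
  have hd2 : (2:ℕ) ∣ d := hde.two_dvd
  obtain rfl | rfl := ha
  · obtain ⟨V, hs, hr⟩ := wp_main d hd2 3 (by norm_num)
    exact ⟨V, hs, by rw [hr]; decide, by rw [hr]; decide⟩
  · obtain ⟨V, hs, hr⟩ := wp_main d hd2 6 (by norm_num)
    exact ⟨V, hs, by rw [hr]; decide, by rw [hr]; decide⟩
end
end
end
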